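/- Let f be holomorphic on a domain D ⊆ ℂ with f′ nonvanishing. Then for every n ≥ 3 and every z ∈ D, the Aharonov invariants satisfy the recursion (n+1)·ψ_n[f](z) = (ψ_{n−1}[f])′(z) + Σ_{k=2}^{n−2} ψ_k[f](z) ψ_{n−k}[f](z). -/

import Mathlib

open Finset

lemma aharonov_coeff_zero (c : ℕ → ℂ) (r : ℝ) (hr : 0 < r)
    (H : ∀ w : ℂ, w ≠ 0 → ‖w‖ < r → HasSum (fun k => c k * w ^ k) 0) : c 0 = 0 := by
  set g : ℂ → ℂ := fun w => ∑' k, c k * w ^ k with hg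
  have hg0 : ∀ w : ℂ, w ≠ 0 → ‖w‖ < r → g w = 0 := fun w h1 h2 => (H w h1 h2).tsum_eq
  have hs0 : HasSum (fun k => c k * (0:ℂ) ^ k) (c 0) := by
    have : ∀ k, k ≠ 0 → c k * (0:ℂ) ^ k = 0 := by
      intro k hk; simp [zero_pow hk]
    simpa using hasSum_single (f := fun k => c k * (0:ℂ) ^ k) 0 this
  have hgz : g 0 = c 0 := hs0.tsum_eq
  have hrpos : (0:ℝ) < r / 2 := by positivity
  set ρ : NNReal := ⟨r / 2, hrpos.le⟩ with hρ
  have hw0 : ((r/2 : ℝ) : ℂ) ≠ 0 := by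
    simp only [ne_eq, Complex.ofReal_eq_zero]; positivity
  have hw0n : ‖((r/2 : ℝ) : ℂ)‖ < r := by
    rw [Complex.norm_real, Real.norm_of_nonneg hrpos.le]; linarith
  have hsum : Summable fun k => c k * ((r/2 : ℝ) : ℂ) ^ k := (H _ hw0 hw0n).summable
  have hnorm : Summable fun k => ‖c k‖ * (r/2) ^ k := by
    have := (summable_norm_iff.mpr hsum)
    refine this.congr fun k => ?_
    rw [norm_mul, norm_pow, Complex.norm_real, Real.norm_of_nonneg hrpos.le]
  set p := FormalMultilinearSeries.ofScalars ℂ c with hp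
  have hrad : (ρ : ENNReal) ≤ p.radius := by
    apply p.le_radius_of_summable
    refine hnorm.congr fun k => ?_
    rw [FormalMultilinearSeries.ofScalars_norm]
    rfl
  have hball : HasFPowerSeriesOnBall g p 0 ρ := by
    refine ⟨hrad, by exact_mod_cast hrpos, ?_⟩
    intro y hy
    have hyn : ‖y‖ < r / 2 := by
      exact ENNReal.coe_lt_coe.mp (by simpa [enorm_eq_nnnorm, hρ] using hy : ENNReal.ofNNReal ‖y‖₊ < ENNReal.ofNNReal ⟨r/2, hrpos.le⟩)
    have : ∀ n, (p n) (fun _ => y) = c n * y ^ n := by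
      intro n; rw [hp, FormalMultilinearSeries.ofScalars_apply_eq]; simp
    rw [zero_add]
    simp only [this]
    by_cases hy0 : y = 0
    · subst hy0; rw [hgz]; exact hs0
    · rw [hg0 y hy0 (by linarith)]; exact H y hy0 (by linarith)
  have hcont : ContinuousAt g 0 := hball.analyticAt.continuousAt
  have h1 : Filter.Tendsto g (nhdsWithin (0:ℂ) {(0:ℂ)}ᶜ) (nhds (g 0)) :=
    hcont.continuousWithinAt.tendsto
  have h2 : Filter.Tendsto g (nhdsWithin (0:ℂ) {(0:ℂ)}ᶜ) (nhds 0) := by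
    have hev : ∀ᶠ w in nhdsWithin (0:ℂ) {(0:ℂ)}ᶜ, g w = 0 := by
      filter_upwards [mem_nhdsWithin_of_mem_nhds (Metric.ball_mem_nhds (0:ℂ) hr),
        self_mem_nhdsWithin] with w hw hw'
      exact hg0 w hw' (by simpa using hw)
    exact Filter.Tendsto.congr' (Filter.EventuallyEq.symm hev) tendsto_const_nhds
  rw [← hgz]
  exact tendsto_nhds_unique h1 h2

lemma aharonov_coeff_all (c : ℕ → ℂ) (r : ℝ) (hr : 0 < r)
    (H : ∀ w : ℂ, w ≠ 0 → ‖w‖ < r → HasSum (fun k => c k * w ^ k) 0) : ∀ m, c m = 0 := by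
  intro m
  induction m using Nat.strong_induction_on with
  | _ m IH =>
    have key : c (0 + m) = 0 := by
      apply aharonov_coeff_zero (fun k => c (k + m)) r hr
      intro w hw hwr
      have h0 : HasSum (fun k => c k * w ^ k) 0 := H w hw hwr
      have h1 : HasSum (fun k => c (k + m) * w ^ (k + m)) 0 := by
        refine (hasSum_nat_add_iff (f := fun n => c n * w ^ n) m).mpr ?_
        have : ∑ i ∈ range m, c i * w ^ i = 0 := by
          apply Finset.sum_eq_zero
          intro i hi
          rw [IH i (mem_range.mp hi), zero_mul]
        rw [this, zero_add]
        exact h0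
      have h2 := h1.mul_left ((w ^ m)⁻¹)
      rw [mul_zero] at h2
      refine h2.congr_fun fun k => ?_
      rw [pow_add]
      field_simp
    simpa using key


noncomputable def aharonovA (f : ℂ → ℂ) (j : ℕ) (ζ : ℂ) : ℂ :=
  (((j+1).factorial : ℂ))⁻¹ * iteratedDeriv (j+1) f ζ

lemma aharonovA_zero (f : ℂ → ℂ) (ζ : ℂ) : aharonovA f 0 ζ = deriv f ζ := by
  simp [aharonovA, iteratedDeriv_one]

lemma aharonov_conv (D : Set ℂ) (hD : IsOpen D) (f : ℂ → ℂ)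
    (hf : DifferentiableOn ℂ f D) (hf' : ∀ z ∈ D, deriv f z ≠ 0)
    (ψ : ℕ → ℂ → ℂ)
    (hψ : ∀ z ∈ D, ∃ r : ℝ, 0 < r ∧ ∀ w : ℂ, w ≠ 0 → ‖w‖ < r →
      HasSum (fun m : ℕ => ψ (m + 1) z * w ^ m)
        (1 / w - deriv f z / (f (z + w) - f z)))
    (ζ : ℂ) (hζ : ζ ∈ D) (n : ℕ) :
    ∑ j ∈ range (n+1), aharonovA f j ζ * ψ (n - j + 1) ζ = aharonovA f (n+1) ζ := by
  obtain ⟨r₀, hr₀, hr⟩ := hψ ζ hζ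
  obtain ⟨ρ₁, hρ₁, hball₁⟩ := Metric.isOpen_iff.mp hD ζ hζ
  -- the function w ↦ f (ζ + w) - f ζ is analytic at 0 and not identically 0
  have hfa : AnalyticAt ℂ f ζ := (hf.analyticOnNhd hD) ζ hζ
  have hφa : AnalyticAt ℂ (fun w => f (ζ + w) - f ζ) 0 := by
    have h1 : AnalyticAt ℂ (fun w : ℂ => f (ζ + w)) 0 := by
      have h0 : AnalyticAt ℂ f (ζ + (0:ℂ)) := by simpa using hfa
      have h2 : AnalyticAt ℂ (fun w : ℂ => ζ + w) 0 := analyticAt_const.add analyticAt_id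
      exact h0.comp h2
    exact h1.sub analyticAt_const
  have hφne : ∀ᶠ w in nhdsWithin (0:ℂ) {(0:ℂ)}ᶜ, f (ζ + w) - f ζ ≠ 0 := by
    rcases hφa.eventually_eq_zero_or_eventually_ne_zero with h | h
    · exfalso
      have hd : deriv (fun w => f (ζ + w) - f ζ) 0 = deriv f ζ := by
        rw [deriv_sub_const, deriv_comp_const_add, add_zero]
      have h0 : deriv (fun w => f (ζ + w) - f ζ) 0 = 0 := by
        have := Filter.EventuallyEq.deriv_eq (h : (fun w => f (ζ + w) - f ζ) =ᶠ[nhds 0] 0)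
        simp at this
        simpa using this
      exact hf' ζ hζ (by rw [← hd, h0])
    · exact h
  obtain ⟨ρ₂, hρ₂, hballne⟩ : ∃ ρ₂ > 0, ∀ w : ℂ, w ≠ 0 → ‖w‖ < ρ₂ → f (ζ + w) - f ζ ≠ 0 := by
    rw [eventually_nhdsWithin_iff, Metric.eventually_nhds_iff] at hφne
    obtain ⟨ε, hε, hh⟩ := hφne
    exact ⟨ε, hε, fun w hw hwε => hh (by simpa using hwε) hw⟩
  set ρ : ℝ := min ρ₁ (min ρ₂ r₀) with hρdef
  have hρ : 0 < ρ := by positivity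
  -- key: coefficients of the difference series vanish
  have key := aharonov_coeff_all
    (fun k => (∑ j ∈ range (k+1), aharonovA f j ζ * ψ (k - j + 1) ζ) - aharonovA f (k+1) ζ)
    ρ hρ ?_
  · exact sub_eq_zero.mp (key n)
  intro w hw hwρ
  have hwρ₁ : ‖w‖ < ρ₁ := lt_of_lt_of_le hwρ (min_le_left _ _)
  have hwρ₂ : ‖w‖ < ρ₂ := lt_of_lt_of_le hwρ (le_trans (min_le_right _ _) (min_le_left _ _))
  have hwr₀ : ‖w‖ < r₀ := lt_of_lt_of_le hwρ (le_trans (min_le_right _ _) (min_le_right _ _))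
  set F : ℂ := f (ζ + w) - f ζ with hFdef
  have hFne : F ≠ 0 := hballne w hw hwρ₂
  -- Taylor series of f at ζ
  have hTay : HasSum (fun k => ((k.factorial : ℂ))⁻¹ • w ^ k • iteratedDeriv k f ζ) (f (ζ + w)) := by
    have hmem : ζ + w ∈ Metric.ball ζ ρ₁ := by
      simp only [Metric.mem_ball, dist_eq_norm, add_sub_cancel_left]
      exact hwρ₁
    have := Complex.hasSum_taylorSeries_on_ball (hf.mono hball₁) hmem
    simpa using this
  have hA : HasSum (fun j => aharonovA f j ζ * w ^ (j+1)) F := by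
    have h1 : HasSum (fun k => ((((k+1).factorial : ℂ))⁻¹ • w ^ (k+1) • iteratedDeriv (k+1) f ζ)) F := by
      refine (hasSum_nat_add_iff (f := fun k => ((k.factorial : ℂ))⁻¹ • w ^ k • iteratedDeriv k f ζ) 1).mpr ?_
      have : ∑ i ∈ range 1, ((i.factorial : ℂ))⁻¹ • w ^ i • iteratedDeriv i f ζ = f ζ := by
        simp [iteratedDeriv_zero]
      rw [this, hFdef, sub_add_cancel]
      exact hTay
    refine h1.congr_fun fun k => ?_
    simp only [aharonovA, smul_eq_mul]
    ring
  have hP : HasSum (fun k => ψ (k + 1) ζ * w ^ k) (1 / w - deriv f ζ / F) := hr w hw hwr₀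
  have hnA : Summable fun j => ‖aharonovA f j ζ * w ^ (j+1)‖ := summable_norm_iff.mpr hA.summable
  have hnP : Summable fun k => ‖ψ (k + 1) ζ * w ^ k‖ := summable_norm_iff.mpr hP.summable
  -- the Cauchy product
  have hprod := tsum_mul_tsum_eq_tsum_sum_antidiagonal_of_summable_norm hnA hnP
  rw [hA.tsum_eq, hP.tsum_eq] at hprod
  have hinner : ∀ m : ℕ, ∑ kl ∈ Finset.HasAntidiagonal.antidiagonal m,
      (aharonovA f kl.1 ζ * w ^ (kl.1+1)) * (ψ (kl.2 + 1) ζ * w ^ kl.2)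
      = (∑ j ∈ range (m+1), aharonovA f j ζ * ψ (m - j + 1) ζ) * w ^ (m+1) := by
    intro m
    rw [Finset.Nat.sum_antidiagonal_eq_sum_range_succ
      (fun i j => (aharonovA f i ζ * w ^ (i+1)) * (ψ (j + 1) ζ * w ^ j)) m, Finset.sum_mul]
    refine Finset.sum_congr rfl fun j hj => ?_
    have hjm : j ≤ m := Nat.lt_succ_iff.mp (mem_range.mp hj)
    have hpow : w ^ (j+1) * w ^ (m - j) = w ^ (m+1) := by
      rw [← pow_add]
      congr 1
      omega
    calc aharonovA f j ζ * w ^ (j+1) * (ψ (m - j + 1) ζ * w ^ (m - j))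
        = aharonovA f j ζ * ψ (m - j + 1) ζ * (w ^ (j+1) * w ^ (m - j)) := by ring
      _ = aharonovA f j ζ * ψ (m - j + 1) ζ * w ^ (m+1) := by rw [hpow]
  -- summability of the Cauchy product series
  have hQsum : Summable (fun m => (∑ j ∈ range (m+1), aharonovA f j ζ * ψ (m - j + 1) ζ) * w ^ (m+1)) := by
    have := summable_norm_sum_mul_antidiagonal_of_summable_norm hnA hnP
    refine Summable.of_norm (this.congr fun m => ?_)
    rw [hinner m]
  have hQ : HasSum (fun m => (∑ j ∈ range (m+1), aharonovA f j ζ * ψ (m - j + 1) ζ) * w ^ (m+1))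
      (F / w - deriv f ζ) := by
    refine (Summable.hasSum_iff hQsum).mpr ?_
    have : ∑' m, (∑ j ∈ range (m+1), aharonovA f j ζ * ψ (m - j + 1) ζ) * w ^ (m+1)
        = ∑' m, ∑ kl ∈ Finset.HasAntidiagonal.antidiagonal m,
          (aharonovA f kl.1 ζ * w ^ (kl.1+1)) * (ψ (kl.2 + 1) ζ * w ^ kl.2) := by
      exact tsum_congr fun m => (hinner m).symm
    rw [this, ← hprod]
    field_simp
  -- the shifted Taylor series
  have hR : HasSum (fun m => aharonovA f (m+1) ζ * w ^ (m+1)) (F / w - deriv f ζ) := by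
    have h1 : HasSum (fun m => aharonovA f (m+1) ζ * w ^ (m+2)) (F - aharonovA f 0 ζ * w) := by
      refine (hasSum_nat_add_iff (f := fun j => aharonovA f j ζ * w ^ (j+1)) 1).mpr ?_
      have : ∑ i ∈ range 1, aharonovA f i ζ * w ^ (i+1) = aharonovA f 0 ζ * w := by
        simp
      rw [this, sub_add_cancel]
      exact hA
    have h2 := h1.mul_left w⁻¹
    have h3 : w⁻¹ * (F - aharonovA f 0 ζ * w) = F / w - deriv f ζ := by
      rw [aharonovA_zero]
      field_simp
    rw [h3] at h2
    refine h2.congr_fun fun m => ?_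
    field_simp
    ring
  have hdiff := hQ.sub hR
  rw [sub_self] at hdiff
  have hdiff2 := hdiff.mul_left w⁻¹
  rw [mul_zero] at hdiff2
  refine hdiff2.congr_fun fun m => ?_
  rw [sub_mul, pow_succ]
  field_simp

lemma aharonov_iter_analytic (D : Set ℂ) (hD : IsOpen D) (f : ℂ → ℂ)
    (hf : DifferentiableOn ℂ f D) (k : ℕ) :
    AnalyticOnNhd ℂ (iteratedDeriv k f) D := by
  induction k with
  | zero => simpa [iteratedDeriv_zero] using hf.analyticOnNhd hD
  | succ k ih => rw [iteratedDeriv_succ]; exact ih.deriv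

lemma aharonovA_hasDerivAt (D : Set ℂ) (hD : IsOpen D) (f : ℂ → ℂ)
    (hf : DifferentiableOn ℂ f D) (j : ℕ) (ζ : ℂ) (hζ : ζ ∈ D) :
    HasDerivAt (aharonovA f j) (((j : ℂ) + 2) * aharonovA f (j+1) ζ) ζ := by
  have h1 : HasDerivAt (iteratedDeriv (j+1) f) (iteratedDeriv (j+2) f ζ) ζ := by
    have hd : DifferentiableAt ℂ (iteratedDeriv (j+1) f) ζ :=
      ((aharonov_iter_analytic D hD f hf (j+1)) ζ hζ).differentiableAt
    have := hd.hasDerivAt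
    rwa [← iteratedDeriv_succ] at this
  have h2 := h1.const_mul ((((j+1).factorial : ℂ))⁻¹)
  have h3 : (((j+1).factorial : ℂ))⁻¹ * iteratedDeriv (j+2) f ζ
      = ((j : ℂ) + 2) * aharonovA f (j+1) ζ := by
    rw [aharonovA]
    have hfac : ((j+2).factorial : ℂ) = ((j:ℂ)+2) * ((j+1).factorial : ℂ) := by
      rw [Nat.factorial_succ]
      push_cast
      ring
    have hne1 : (((j+1).factorial : ℂ)) ≠ 0 := by
      exact_mod_cast Nat.cast_ne_zero.mpr (j+1).factorial_ne_zero
    have hne2 : (((j+2).factorial : ℂ)) ≠ 0 := by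
      exact_mod_cast Nat.cast_ne_zero.mpr (j+2).factorial_ne_zero
    have : (j:ℂ) + 1 + 1 = (j:ℂ) + 2 := by ring
    rw [show j + 1 + 1 = j + 2 from rfl, hfac, mul_inv, ← mul_assoc, ← mul_assoc,
      mul_inv_cancel₀ (by
        have : ((j:ℂ)+2) = ((j+2 : ℕ) : ℂ) := by push_cast; ring
        rw [this]
        exact_mod_cast Nat.succ_ne_zero (j+1) : ((j:ℂ)+2) ≠ 0), one_mul]
  rw [← h3]
  exact h2


lemma aharonov_tri_swap (m : ℕ) (F : ℕ → ℕ → ℂ) :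
    ∑ j ∈ range m, ∑ i ∈ range (m - j), F j i
      = ∑ i ∈ range m, ∑ j ∈ range (m - i), F j i := by
  rw [Finset.sum_sigma', Finset.sum_sigma']
  refine Finset.sum_nbij' (fun x => ⟨x.2, x.1⟩) (fun x => ⟨x.2, x.1⟩) ?_ ?_
    (fun _ _ => rfl) (fun _ _ => rfl) (fun _ _ => rfl) <;>
  · simp only [Finset.mem_sigma, Finset.mem_range, Sigma.forall]
    intro a b
    omega

lemma aharonov_ident (m : ℕ) (a p e : ℕ → ℂ)
    (hC : ∀ k, ∑ j ∈ range (k+1), a j * p (k - j + 1) = a (k+1))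
    (he : ∀ k, e k = ((k:ℂ)+3) * p (k+2) + 2 * p 1 * p (k+1)
      - ∑ i ∈ range (k+1), p (i+1) * p (k - i + 1)) :
    ((m:ℂ)+3) * a (m+2)
      - (∑ j ∈ range m, (((j:ℂ)+3) * a (j+2) * p (m-j) + a (j+1) * e (m-j-1)))
      - 2 * a 1 * p (m+1) = a 0 * e m := by
  -- the shifted convolution identity
  have L : ∀ k, ∑ j ∈ range k, a (j+1) * p (k-j) = a (k+1) - a 0 * p (k+1) := by
    intro k
    have h := hC k
    rw [Finset.sum_range_succ'] at h
    simp only [Nat.sub_zero] at h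
    have h2 : ∑ j ∈ range k, a (j+1) * p (k-(j+1)+1) = ∑ j ∈ range k, a (j+1) * p (k-j) := by
      refine Finset.sum_congr rfl fun j hj => ?_
      have := mem_range.mp hj
      congr 2
      omega
    rw [h2] at h
    linear_combination h
  have hC0 : a 0 * p 1 = a 1 := by
    have := hC 0
    simpa using this
  -- split the big sum
  rw [Finset.sum_add_distrib]
  -- expand `e` inside the sum
  have hesum : ∑ j ∈ range m, a (j+1) * e (m-j-1)
      = (∑ j ∈ range m, ((m:ℂ)-(j:ℂ)+2) * (a (j+1) * p (m-j+1)))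
        + 2 * p 1 * (∑ j ∈ range m, a (j+1) * p (m-j))
        - ∑ j ∈ range m, ∑ i ∈ range (m-j), a (j+1) * (p (i+1) * p (m-j-i)) := by
    have step : ∀ j ∈ range m, a (j+1) * e (m-j-1)
        = ((m:ℂ)-(j:ℂ)+2) * (a (j+1) * p (m-j+1)) + 2 * p 1 * (a (j+1) * p (m-j))
          - ∑ i ∈ range (m-j), a (j+1) * (p (i+1) * p (m-j-i)) := by
      intro j hj
      have hj' := mem_range.mp hj
      have c1 : (m-j-1) + 2 = m - j + 1 := by omega
      have c2 : (m-j-1) + 1 = m - j := by omega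
      have c4 : ((m-j-1 : ℕ) : ℂ) = (m:ℂ) - (j:ℂ) - 1 := by
        have h5 : (m - j - 1 : ℕ) = m - (j+1) := by omega
        rw [h5, Nat.cast_sub (by omega)]
        push_cast
        ring
      have hin : ∑ i ∈ range (m-j), p (i+1) * p (m - j - 1 - i + 1)
          = ∑ i ∈ range (m-j), p (i+1) * p (m-j-i) := by
        refine Finset.sum_congr rfl fun i hi => ?_
        have := mem_range.mp hi
        congr 2
        omega
      rw [he (m-j-1), c1, c2, c4, hin, mul_sub, mul_add, Finset.mul_sum]
      ring_nf
    calc ∑ j ∈ range m, a (j+1) * e (m-j-1)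
        = ∑ j ∈ range m, (((m:ℂ)-(j:ℂ)+2) * (a (j+1) * p (m-j+1))
            + 2 * p 1 * (a (j+1) * p (m-j))
            - ∑ i ∈ range (m-j), a (j+1) * (p (i+1) * p (m-j-i))) :=
          Finset.sum_congr rfl step
      _ = _ := by
          rw [Finset.sum_sub_distrib, Finset.sum_add_distrib, ← Finset.mul_sum]
  -- the `V + W` combination
  have hW : ∑ j ∈ range (m+1), ((j:ℂ)+2) * (a (j+1) * p (m-j+1))
      = (∑ j ∈ range m, ((j:ℂ)+3) * a (j+2) * p (m-j)) + 2 * (a 1 * p (m+1)) := by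
    rw [Finset.sum_range_succ']
    simp only [Nat.sub_zero, Nat.cast_zero, Nat.cast_add, Nat.cast_one]
    have : ∀ j ∈ range m, (((j:ℂ)+1)+2) * (a (j+1+1) * p (m-(j+1)+1))
        = ((j:ℂ)+3) * a (j+2) * p (m-j) := by
      intro j hj
      have hj' := mem_range.mp hj
      have : m - (j+1) + 1 = m - j := by omega
      rw [this]
      ring
    rw [Finset.sum_congr rfl this]
    ring
  have hV : ∑ j ∈ range m, ((m:ℂ)-(j:ℂ)+2) * (a (j+1) * p (m-j+1))
      = (∑ j ∈ range (m+1), ((m:ℂ)-(j:ℂ)+2) * (a (j+1) * p (m-j+1))) - 2 * (a (m+1) * p 1) := by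
    rw [Finset.sum_range_succ]
    simp only [Nat.sub_self]
    ring
  have hSS : ∑ j ∈ range (m+1), a (j+1) * p (m-j+1) = a (m+2) - a 0 * p (m+2) := by
    have := L (m+1)
    have h2 : ∑ j ∈ range (m+1), a (j+1) * p (m+1-j) = ∑ j ∈ range (m+1), a (j+1) * p (m-j+1) := by
      refine Finset.sum_congr rfl fun j hj => ?_
      have := mem_range.mp hj
      congr 2
      omega
    rw [h2] at this
    exact this
  have hVW : (∑ j ∈ range m, ((m:ℂ)-(j:ℂ)+2) * (a (j+1) * p (m-j+1)))
      + (∑ j ∈ range m, ((j:ℂ)+3) * a (j+2) * p (m-j))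
      = ((m:ℂ)+4) * (a (m+2) - a 0 * p (m+2)) - 2 * (a (m+1) * p 1) - 2 * (a 1 * p (m+1)) := by
    have hadd : (∑ j ∈ range (m+1), ((m:ℂ)-(j:ℂ)+2) * (a (j+1) * p (m-j+1)))
        + (∑ j ∈ range (m+1), ((j:ℂ)+2) * (a (j+1) * p (m-j+1)))
        = ((m:ℂ)+4) * ∑ j ∈ range (m+1), a (j+1) * p (m-j+1) := by
      rw [← Finset.sum_add_distrib, Finset.mul_sum]
      refine Finset.sum_congr rfl fun j hj => ?_
      ring
    rw [hSS] at hadd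
    linear_combination hadd + hV - hW
  -- the double sum, via Fubini
  have hU : ∑ j ∈ range m, ∑ i ∈ range (m-j), a (j+1) * (p (i+1) * p (m-j-i))
      = (a (m+2) - a 0 * p (m+2) - a 1 * p (m+1))
        - a 0 * ((∑ i ∈ range (m+1), p (i+1) * p (m-i+1)) - p (m+1) * p 1) := by
    rw [aharonov_tri_swap m (fun j i => a (j+1) * (p (i+1) * p (m-j-i)))]
    have hin : ∀ i ∈ range m, ∑ j ∈ range (m-i), a (j+1) * (p (i+1) * p (m-j-i))
        = p (i+1) * (a (m-i+1) - a 0 * p (m-i+1)) := by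
      intro i hi
      have hi' := mem_range.mp hi
      have h1 : ∑ j ∈ range (m-i), a (j+1) * (p (i+1) * p (m-j-i))
          = p (i+1) * ∑ j ∈ range (m-i), a (j+1) * p ((m-i)-j) := by
        rw [Finset.mul_sum]
        refine Finset.sum_congr rfl fun j hj => ?_
        have := mem_range.mp hj
        have : m - j - i = m - i - j := by omega
        rw [this]
        ring
      rw [h1, L (m-i)]
    rw [Finset.sum_congr rfl hin]
    have hsplit : ∑ i ∈ range m, p (i+1) * (a (m-i+1) - a 0 * p (m-i+1))
        = (∑ i ∈ range m, p (i+1) * a (m-i+1)) - a 0 * ∑ i ∈ range m, p (i+1) * p (m-i+1) := by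
      rw [Finset.mul_sum, ← Finset.sum_sub_distrib]
      refine Finset.sum_congr rfl fun i hi => ?_
      ring
    rw [hsplit]
    have hU1 : ∑ i ∈ range m, p (i+1) * a (m-i+1) = a (m+2) - a 0 * p (m+2) - a 1 * p (m+1) := by
      have hrefl := Finset.sum_range_reflect (fun i => p (i+1) * a (m-i+1)) m
      have hc : ∀ j ∈ range m, p ((m-1-j)+1) * a (m-(m-1-j)+1) = a (j+2) * p (m-j) := by
        intro j hj
        have hj' := mem_range.mp hj
        have e1 : m - 1 - j + 1 = m - j := by omega
        have e2 : m - (m-1-j) + 1 = j + 2 := by omega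
        rw [e1, e2]
        ring
      rw [Finset.sum_congr rfl hc] at hrefl
      -- hrefl : ∑ j ∈ range m, a (j+2) * p (m-j) = ∑ i ∈ range m, p (i+1) * a (m-i+1)
      have hsplit2 : ∑ j ∈ range (m+1), a (j+1) * p (m-j+1)
          = (∑ j ∈ range m, a (j+2) * p (m-j)) + a 1 * p (m+1) := by
        rw [Finset.sum_range_succ']
        simp only [Nat.sub_zero]
        congr 1
        refine Finset.sum_congr rfl fun j hj => ?_
        have := mem_range.mp hj
        have : m - (j+1) + 1 = m - j := by omega
        rw [this]
      rw [hSS] at hsplit2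
      linear_combination - hrefl - hsplit2
    have hU2 : ∑ i ∈ range m, p (i+1) * p (m-i+1)
        = (∑ i ∈ range (m+1), p (i+1) * p (m-i+1)) - p (m+1) * p 1 := by
      rw [Finset.sum_range_succ]
      simp only [Nat.sub_self]
      ring
    rw [hU1, hU2]
  -- final assembly
  rw [hesum, he m]
  have hLm := L m
  linear_combination (-1 : ℂ) * hVW - 2 * p 1 * hLm + hU + p (m+1) * hC0


noncomputable def aharonovE (ψ : ℕ → ℂ → ℂ) (m : ℕ) (ζ : ℂ) : ℂ :=
  ((m:ℂ)+3) * ψ (m+2) ζ + 2 * ψ 1 ζ * ψ (m+1) ζ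
    - ∑ i ∈ Finset.range (m+1), ψ (i+1) ζ * ψ (m-i+1) ζ

lemma aharonov_hasDerivAt (D : Set ℂ) (hD : IsOpen D) (f : ℂ → ℂ)
    (hf : DifferentiableOn ℂ f D) (hf' : ∀ z ∈ D, deriv f z ≠ 0)
    (ψ : ℕ → ℂ → ℂ)
    (hψ : ∀ z ∈ D, ∃ r : ℝ, 0 < r ∧ ∀ w : ℂ, w ≠ 0 → ‖w‖ < r →
      HasSum (fun m : ℕ => ψ (m + 1) z * w ^ m)
        (1 / w - deriv f z / (f (z + w) - f z)))
    (m : ℕ) (ζ : ℂ) (hζ : ζ ∈ D) :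
    HasDerivAt (ψ (m+1)) (aharonovE ψ m ζ) ζ := by
  induction m using Nat.strong_induction_on generalizing ζ with
  | _ m IH =>
  have hA0 : ∀ ξ ∈ D, aharonovA f 0 ξ ≠ 0 := fun ξ hξ => by
    rw [aharonovA_zero]; exact hf' ξ hξ
  have hconv : ∀ ξ ∈ D, aharonovA f 0 ξ * ψ (m+1) ξ
      = aharonovA f (m+1) ξ - ∑ j ∈ range m, aharonovA f (j+1) ξ * ψ (m-j) ξ := by
    intro ξ hξ
    have h := aharonov_conv D hD f hf hf' ψ hψ ξ hξ m
    rw [Finset.sum_range_succ'] at h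
    simp only [Nat.sub_zero] at h
    have h2 : ∑ j ∈ range m, aharonovA f (j+1) ξ * ψ (m-(j+1)+1) ξ
        = ∑ j ∈ range m, aharonovA f (j+1) ξ * ψ (m-j) ξ := by
      refine Finset.sum_congr rfl fun j hj => ?_
      have := mem_range.mp hj
      congr 2
      omega
    rw [h2] at h
    linear_combination h
  have hg_eq : ∀ ξ ∈ D, ψ (m+1) ξ
      = (aharonovA f (m+1) ξ - ∑ j ∈ range m, aharonovA f (j+1) ξ * ψ (m-j) ξ)
        / aharonovA f 0 ξ := by
    intro ξ hξ
    rw [← hconv ξ hξ, mul_comm, mul_div_assoc, div_self (hA0 ξ hξ), mul_one]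
  -- derivative of the numerator
  have hnum : HasDerivAt
      (fun ξ => aharonovA f (m+1) ξ - ∑ j ∈ range m, aharonovA f (j+1) ξ * ψ (m-j) ξ)
      (((m:ℂ)+3) * aharonovA f (m+2) ζ
        - ∑ j ∈ range m, (((j:ℂ)+3) * aharonovA f (j+2) ζ * ψ (m-j) ζ
            + aharonovA f (j+1) ζ * aharonovE ψ (m-j-1) ζ)) ζ := by
    have h1 := aharonovA_hasDerivAt D hD f hf (m+1) ζ hζ
    have h1' : HasDerivAt (aharonovA f (m+1)) (((m:ℂ)+3) * aharonovA f (m+2) ζ) ζ := by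
      have : (((m+1 : ℕ) : ℂ) + 2) = (m:ℂ)+3 := by push_cast; ring
      rwa [this, show m+1+1 = m+2 from rfl] at h1
    have h2 : HasDerivAt (fun ξ => ∑ j ∈ range m, aharonovA f (j+1) ξ * ψ (m-j) ξ)
        (∑ j ∈ range m, (((j:ℂ)+3) * aharonovA f (j+2) ζ * ψ (m-j) ζ
            + aharonovA f (j+1) ζ * aharonovE ψ (m-j-1) ζ)) ζ := by
      refine HasDerivAt.fun_sum fun j hj => ?_
      have hj' := mem_range.mp hj
      have ha := aharonovA_hasDerivAt D hD f hf (j+1) ζ hζ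
      have ha' : HasDerivAt (aharonovA f (j+1)) (((j:ℂ)+3) * aharonovA f (j+2) ζ) ζ := by
        have : (((j+1 : ℕ) : ℂ) + 2) = (j:ℂ)+3 := by push_cast; ring
        rwa [this, show j+1+1 = j+2 from rfl] at ha
      have hp : HasDerivAt (ψ (m-j)) (aharonovE ψ (m-j-1) ζ) ζ := by
        have := IH (m-j-1) (by omega) ζ hζ
        rwa [show m-j-1+1 = m-j by omega] at this
      exact ha'.mul hp
    exact h1'.sub h2
  have hden := aharonovA_hasDerivAt D hD f hf 0 ζ hζ
  have hg := hnum.div hden (hA0 ζ hζ)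
  have hev : ψ (m+1) =ᶠ[nhds ζ]
      (fun ξ => (aharonovA f (m+1) ξ - ∑ j ∈ range m, aharonovA f (j+1) ξ * ψ (m-j) ξ)
        / aharonovA f 0 ξ) := by
    filter_upwards [hD.mem_nhds hζ] with ξ hξ
    exact hg_eq ξ hξ
  have hψd := hg.congr_of_eventuallyEq hev
  refine hψd.congr_deriv ?_
  symm
  rw [eq_div_iff (pow_ne_zero 2 (hA0 ζ hζ))]
  have hident := aharonov_ident m (fun k => aharonovA f k ζ) (fun k => ψ k ζ)
    (fun k => aharonovE ψ k ζ)
    (fun k => aharonov_conv D hD f hf hf' ψ hψ ζ hζ k)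
    (fun k => rfl)
  have hcv := hconv ζ hζ
  push_cast
  linear_combination (-(aharonovA f 0 ζ)) * hident - (2 * aharonovA f 1 ζ) * hcv

/-- Aharonov's recursion formula `(n+1)ψ_n[f] = (ψ_{n-1}[f])' + ∑_{k=2}^{n-2} ψ_k[f] ψ_{n-k}[f]`,
where the Aharonov invariants `ψ_m[f]` are defined by the expansion
`f'(z)/(f(z+w) - f(z)) = 1/w - ∑_{m≥1} ψ_m[f](z) w^{m-1}` for small `w ≠ 0`. -/
theorem aharonov_recursion (D : Set ℂ) (hD : IsOpen D) (f : ℂ → ℂ)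
    (hf : DifferentiableOn ℂ f D) (hf' : ∀ z ∈ D, deriv f z ≠ 0)
    (ψ : ℕ → ℂ → ℂ)
    (hψ : ∀ z ∈ D, ∃ r : ℝ, 0 < r ∧ ∀ w : ℂ, w ≠ 0 → ‖w‖ < r →
      HasSum (fun m : ℕ => ψ (m + 1) z * w ^ m)
        (1 / w - deriv f z / (f (z + w) - f z)))
    (n : ℕ) (hn : 3 ≤ n) (z : ℂ) (hz : z ∈ D) :
    ((n : ℂ) + 1) * ψ n z =
      deriv (ψ (n - 1)) z + ∑ k ∈ Finset.Icc 2 (n - 2), ψ k z * ψ (n - k) z := by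
  have h := aharonov_hasDerivAt D hD f hf hf' ψ hψ (n-2) z hz
  rw [show n-2+1 = n-1 by omega] at h
  rw [h.deriv, aharonovE, show n-2+2 = n by omega, show n-2+1 = n-1 by omega,
    show ((n-2 : ℕ):ℂ) = (n:ℂ) - 2 by rw [Nat.cast_sub (by omega)]; norm_num]
  have hset : Finset.Icc 1 (n-1) = insert 1 (insert (n-1) (Finset.Icc 2 (n-2))) := by
    ext x
    simp only [Finset.mem_Icc, Finset.mem_insert]
    omega
  have h1 : ∑ i ∈ range (n-1), ψ (i+1) z * ψ (n-2-i+1) z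
      = ∑ k ∈ Finset.Icc 1 (n-1), ψ k z * ψ (n-k) z := by
    rw [show Finset.Icc 1 (n-1) = Finset.Ico 1 n by
      rw [← Finset.Ico_add_one_right_eq_Icc]
      congr 1
      omega]
    rw [Finset.sum_Ico_eq_sum_range]
    refine Finset.sum_congr rfl fun i hi => ?_
    have hi' := mem_range.mp hi
    rw [Nat.add_comm 1 i, show n - (i+1) = n - 2 - i + 1 from by omega]
  have h2 : ∑ k ∈ Finset.Icc 1 (n-1), ψ k z * ψ (n-k) z
      = ψ 1 z * ψ (n-1) z + ψ (n-1) z * ψ 1 z + ∑ k ∈ Finset.Icc 2 (n-2), ψ k z * ψ (n-k) z := by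
    rw [hset, Finset.sum_insert, Finset.sum_insert]
    · rw [show n - (n-1) = 1 by omega]
      ring
    · simp only [Finset.mem_Icc]
      omega
    · simp only [Finset.mem_insert, Finset.mem_Icc]
      omega
  rw [h1, h2]
  ring
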